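/- Two distinct 2-(v,5,1) directed designs on the same point set can never have exactly b_v − 1 common blocks, where b_v = v(v−1)/10 is the number of blocks; hence I_D(v) ⊆ J_D(v) = {0,1,...,b_v−2, b_v}. -/

import Mathlib

/-- An ordered pair `(x,y)` is covered by an ordered 5-tuple `b` if `x` occurs before `y`. -/
def coversPair {n : ℕ} (b : Fin 5 → Fin n) (x y : Fin n) : Prop :=
  ∃ i j : Fin 5, i < j ∧ b i = x ∧ b j = y

instance {n : ℕ} (b : Fin 5 → Fin n) (x y : Fin n) : Decidable (coversPair b x y) := by
  unfold coversPair; infer_instance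

/-- A 2-(n,5,1) directed design: blocks are injective 5-tuples and every ordered pair of
distinct points is covered by exactly one block. -/
def IsDD (n : ℕ) (D : Finset (Fin 5 → Fin n)) : Prop :=
  (∀ b ∈ D, Function.Injective b) ∧
  ∀ x y : Fin n, x ≠ y → (D.filter (fun b => coversPair b x y)).card = 1

/-- The intersection spectrum of 2-(n,5,1) directed designs. -/
def IDset (n : ℕ) : Set ℕ :=
  {m | ∃ D1 D2 : Finset (Fin 5 → Fin n), IsDD n D1 ∧ IsDD n D2 ∧ (D1 ∩ D2).card = m}

/-- J_D for a design with b blocks: all values 0,…,b−2 together with b. -/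
def JDset (b : ℕ) : Set ℕ := {m | m = b ∨ m + 2 ≤ b}

set_option linter.deprecated false

/-- strictly monotone self map of Fin n is id -/
lemma fin_strictMono_eq_id {n : ℕ} (f : Fin n → Fin n) (hf : StrictMono f) : f = id := by
  have hinj := hf.injective
  have hbij : Function.Bijective f := Finite.injective_iff_bijective.mp hinj
  have hr : Set.range f = Set.range (id : Fin n → Fin n) := by
    rw [hbij.surjective.range_eq, Set.range_id]
  exact (hf.range_inj strictMono_id).mp hr

/-- two injective 5-tuples covering the same ordered pairs are equal -/
lemma tuple_eq_of_covers {n : ℕ} (b1 b2 : Fin 5 → Fin n)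
    (h1 : Function.Injective b1) (h2 : Function.Injective b2)
    (hc : ∀ x y : Fin n, x ≠ y → (coversPair b1 x y ↔ coversPair b2 x y)) : b1 = b2 := by
  -- each b1 i is in range of b2
  have hmem : ∀ i : Fin 5, ∃ k, b2 k = b1 i := by
    intro i
    rcases eq_or_ne i 0 with rfl | hi
    · have hne : b1 0 ≠ b1 1 := fun h => by simpa using h1 h
      have : coversPair b2 (b1 0) (b1 1) :=
        (hc _ _ hne).mp ⟨0, 1, by decide, rfl, rfl⟩
      obtain ⟨p, q, _, hp, _⟩ := this
      exact ⟨p, hp⟩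
    · have hne : b1 0 ≠ b1 i := fun h => hi (h1 h).symm
      have : coversPair b2 (b1 0) (b1 i) :=
        (hc _ _ hne).mp ⟨0, i, Fin.pos_of_ne_zero hi, rfl, rfl⟩
      obtain ⟨p, q, _, _, hq⟩ := this
      exact ⟨q, hq⟩
  choose f hfeq using hmem
  have hsm : StrictMono f := by
    intro i j hij
    have hne : b1 i ≠ b1 j := fun h => hij.ne (h1 h)
    have : coversPair b2 (b1 i) (b1 j) := (hc _ _ hne).mp ⟨i, j, hij, rfl, rfl⟩
    obtain ⟨p, q, hpq, hp, hq⟩ := this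
    have : p = f i := h2 (by rw [hp, hfeq])
    have hq' : q = f j := h2 (by rw [hq, hfeq])
    rw [← this, ← hq']; exact hpq
  have := fin_strictMono_eq_id f hsm
  funext i
  rw [← hfeq i, this]; rfl


/-- each injective block covers exactly 10 ordered pairs -/
lemma block_covers_card {n : ℕ} (b : Fin 5 → Fin n) (hb : Function.Injective b) :
    ((Finset.univ : Finset (Fin n)).offDiag.filter
      (fun p => coversPair b p.1 p.2)).card = 10 := by
  classical
  have himg : ((Finset.univ : Finset (Fin 5 × Fin 5)).filter (fun q => q.1 < q.2)).image
      (fun q => (b q.1, b q.2)) =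
      (Finset.univ : Finset (Fin n)).offDiag.filter (fun p => coversPair b p.1 p.2) := by
    ext p
    simp only [Finset.mem_image, Finset.mem_filter, Finset.mem_offDiag, Finset.mem_univ,
      true_and]
    constructor
    · rintro ⟨q, hq, rfl⟩
      exact ⟨fun h => (hq.ne (hb h)), q.1, q.2, hq, rfl, rfl⟩
    · rintro ⟨hne, i, j, hij, hi, hj⟩
      exact ⟨(i, j), hij, by simp [hi, hj]⟩
  rw [← himg, Finset.card_image_of_injOn, show ((Finset.univ : Finset (Fin 5 × Fin 5)).filter
      (fun q => q.1 < q.2)).card = 10 by decide]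
  intro q1 _ q2 _ h
  have h1 : b q1.1 = b q2.1 := congrArg Prod.fst h
  have h2 : b q1.2 = b q2.2 := congrArg Prod.snd h
  exact Prod.ext (hb h1) (hb h2)

/-- any directed design has exactly n(n-1)/10 blocks (times 10) -/
lemma DD_ten_card {n : ℕ} {D : Finset (Fin 5 → Fin n)} (hD : IsDD n D) :
    10 * D.card = n * (n - 1) := by
  classical
  obtain ⟨hinj, hcov⟩ := hD
  set P : Finset (Fin n × Fin n) := (Finset.univ : Finset (Fin n)).offDiag with hP
  have hPcard : P.card = n * (n - 1) := by
    rw [hP, Finset.offDiag_card, Finset.card_univ, Fintype.card_fin]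
    cases n with
    | zero => rfl
    | succ m => rw [Nat.succ_sub_one, Nat.mul_succ]; exact Nat.add_sub_cancel _ _
  have key : ∑ p ∈ P, (D.filter (fun b => coversPair b p.1 p.2)).card
      = ∑ b ∈ D, (P.filter (fun p => coversPair b p.1 p.2)).card := by
    simp_rw [Finset.card_filter]
    exact Finset.sum_comm
  have hL : ∑ p ∈ P, (D.filter (fun b => coversPair b p.1 p.2)).card = n * (n - 1) := by
    rw [Finset.sum_congr rfl (fun p hp => hcov p.1 p.2 (Finset.mem_offDiag.mp hp).2.2),
      Finset.sum_const, Nat.smul_one_eq_cast]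
    exact hPcard
  have hR : ∑ b ∈ D, (P.filter (fun p => coversPair b p.1 p.2)).card = 10 * D.card := by
    rw [Finset.sum_congr rfl (fun b hb => block_covers_card b (hinj b hb)),
      Finset.sum_const, smul_eq_mul, Nat.mul_comm]
  rw [← hR, ← key, hL]

lemma never_b_sub_one (v : ℕ) (D1 D2 : Finset (Fin 5 → Fin v)) (h1 : IsDD v D1)
    (h2 : IsDD v D2) (hne : D1 ≠ D2) : (D1 ∩ D2).card ≠ v * (v - 1) / 10 - 1 := by
  classical
  intro hcard
  have hc1 : 10 * D1.card = v * (v - 1) := DD_ten_card h1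
  have hc2 : 10 * D2.card = v * (v - 1) := DD_ten_card h2
  set B := v * (v - 1) / 10 with hB
  have hD1 : D1.card = B := by omega
  have hD2 : D2.card = B := by omega
  rcases Nat.eq_zero_or_pos B with hB0 | hBpos
  · apply hne
    rw [Finset.card_eq_zero.mp (hD1.trans hB0), Finset.card_eq_zero.mp (hD2.trans hB0)]
  · have hi1 : (D1 ∩ D2).card + (D1 \ D2).card = D1.card :=
      Finset.card_inter_add_card_sdiff D1 D2
    have hi2 : (D2 ∩ D1).card + (D2 \ D1).card = D2.card :=
      Finset.card_inter_add_card_sdiff D2 D1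
    rw [Finset.inter_comm] at hi2
    have hs1 : (D1 \ D2).card = 1 := by omega
    have hs2 : (D2 \ D1).card = 1 := by omega
    obtain ⟨b1, hb1⟩ := Finset.card_eq_one.mp hs1
    obtain ⟨b2, hb2⟩ := Finset.card_eq_one.mp hs2
    have hb1m : b1 ∈ D1 \ D2 := hb1 ▸ Finset.mem_singleton_self b1
    have hb2m : b2 ∈ D2 \ D1 := hb2 ▸ Finset.mem_singleton_self b2
    have hb1D1 : b1 ∈ D1 := (Finset.mem_sdiff.mp hb1m).1
    have hb1nD2 : b1 ∉ D2 := (Finset.mem_sdiff.mp hb1m).2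
    have hb2D2 : b2 ∈ D2 := (Finset.mem_sdiff.mp hb2m).1
    have hbne : b1 ≠ b2 := fun h => hb1nD2 (h ▸ hb2D2)
    apply hbne
    apply tuple_eq_of_covers b1 b2 (h1.1 b1 hb1D1) (h2.1 b2 hb2D2)
    intro x y hxy
    have e1 : (D1.filter (fun b => coversPair b x y)).card = 1 := h1.2 x y hxy
    have e2 : (D2.filter (fun b => coversPair b x y)).card = 1 := h2.2 x y hxy
    have hb2nD1 : b2 ∉ D1 := (Finset.mem_sdiff.mp hb2m).2
    have hu1 : D1 = {b1} ∪ (D1 ∩ D2) := by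
      rw [← hb1, Finset.sdiff_union_inter]
    have hu2 : D2 = {b2} ∪ (D1 ∩ D2) := by
      rw [← hb2, Finset.inter_comm, Finset.sdiff_union_inter]
    have hdisj1 : Disjoint ({b1} : Finset (Fin 5 → Fin v)) (D1 ∩ D2) :=
      Finset.disjoint_singleton_left.mpr (fun h => hb1nD2 (Finset.mem_inter.mp h).2)
    have hdisj2 : Disjoint ({b2} : Finset (Fin 5 → Fin v)) (D1 ∩ D2) :=
      Finset.disjoint_singleton_left.mpr (fun h => hb2nD1 (Finset.mem_inter.mp h).1)
    rw [hu1, Finset.filter_union,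
      Finset.card_union_of_disjoint (Finset.disjoint_filter_filter hdisj1),
      Finset.filter_singleton] at e1
    rw [hu2, Finset.filter_union,
      Finset.card_union_of_disjoint (Finset.disjoint_filter_filter hdisj2),
      Finset.filter_singleton] at e2
    by_cases hc1' : coversPair b1 x y
    · by_cases hc2' : coversPair b2 x y
      · exact iff_of_true hc1' hc2'
      · rw [if_pos hc1', Finset.card_singleton] at e1
        rw [if_neg hc2', Finset.card_empty] at e2
        omega
    · by_cases hc2' : coversPair b2 x y
      · rw [if_neg hc1', Finset.card_empty] at e1
        rw [if_pos hc2', Finset.card_singleton] at e2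
        omega
      · exact iff_of_false hc1' hc2'

theorem intersection_never_b_sub_one (v : ℕ) :
    (∀ D1 D2 : Finset (Fin 5 → Fin v), IsDD v D1 → IsDD v D2 → D1 ≠ D2 →
        (D1 ∩ D2).card ≠ v * (v - 1) / 10 - 1) ∧
    IDset v ⊆ JDset (v * (v - 1) / 10) := by
  constructor
  · exact never_b_sub_one v
  · rintro m ⟨D1, D2, h1, h2, hm⟩
    set B := v * (v - 1) / 10 with hB
    have hc1 : 10 * D1.card = v * (v - 1) := DD_ten_card h1
    have hc2 : 10 * D2.card = v * (v - 1) := DD_ten_card h2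
    have hD1 : D1.card = B := by omega
    have hD2 : D2.card = B := by omega
    by_cases heq : D1 = D2
    · left
      rw [← hm, heq, Finset.inter_self, hD2]
    · right
      have hle : m ≤ B := by
        rw [← hm, ← hD1]
        exact Finset.card_le_card Finset.inter_subset_left
      have hne1 : m ≠ B - 1 := hm ▸ never_b_sub_one v D1 D2 h1 h2 heq
      have hneB : m ≠ B := by
        intro hmB
        apply heq
        have hsub : D1 ⊆ D2 := by
          have : D1 ∩ D2 = D1 := Finset.eq_of_subset_of_card_le Finset.inter_subset_left
            (by rw [hm, hmB, hD1])
          exact fun a ha => (Finset.mem_inter.mp (this ▸ ha)).2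
        exact Finset.eq_of_subset_of_card_le hsub (by rw [hD1, hD2])
      -- m ≤ B, m ≠ B, m ≠ B - 1; if B ≤ 1 both designs have card B so m ≤ B ≤ 1...
      rcases Nat.lt_or_ge B 2 with hB2 | hB2
      · omega
      · omega
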